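/- Let d be a positive squarefree integer with d ≡ 2 (mod 4), let m, n ∈ ℤ, set β = m + n·i√d, and let t ∈ ℝ. Then all entries of the Heisenberg translation matrix T(β,t) lie in the ring ℤ[i√d] = {a + b·i√d : a, b ∈ ℤ} if and only if m is even and t ∈ 2√d·ℤ. (In particular, a translation of ℂ by β = m + n·i√d lifts to the stabiliser of q∞ in U(2,1;ℤ[i√d]) if and only if m is even, and the vertical translations T(0,t) in this stabiliser are exactly those with t ∈ 2√d·ℤ.) -/

import Mathlib

noncomputable section

open Complex

/-- The Heisenberg translation matrix `T(β,t)`, with rows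
`(1, −conj β, (−|β|² + i t)/2)`, `(0, 1, β)`, `(0, 0, 1)`. -/
def Tmat (β : ℂ) (t : ℝ) : Matrix (Fin 3) (Fin 3) ℂ :=
  !![1, -((starRingEnd ℂ) β), ((-((‖β‖ ^ 2 : ℝ) : ℂ)) + Complex.I * (t : ℝ))/2;
     0, 1, β;
     0, 0, 1]

/-- The ring `ℤ[i√d] = {a + b·i√d : a, b ∈ ℤ}`, as a subset of `ℂ`. -/
def Zid (d : ℕ) : Set ℂ :=
  {z | ∃ a b : ℤ, z = (a : ℂ) + (b : ℂ) * (Complex.I * ((√(d : ℝ)) : ℝ))}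

lemma mem_Zid_iff (d : ℕ) (z : ℂ) :
    z ∈ Zid d ↔ ∃ a b : ℤ, z.re = (a : ℝ) ∧ z.im = (b : ℝ) * √(d : ℝ) := by
  constructor
  · rintro ⟨a, b, rfl⟩
    exact ⟨a, b, by simp, by simp⟩
  · rintro ⟨a, b, h1, h2⟩
    exact ⟨a, b, by apply Complex.ext <;> simp [h1, h2]⟩

/-- **Lifting of lattice translations, case `d ≡ 2 (mod 4)`** (part (i) of the proof of
Proposition 3.1): for `β = m + n·i√d`, the Heisenberg translation matrix `T(β,t)` has all
its entries in `ℤ[i√d]` if and only if `m` is even and `t ∈ 2√d·ℤ`. -/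
theorem heisenberg_translation_lift_two_mod_four
    (d : ℕ) (hd0 : 0 < d) (hdsf : Squarefree d) (hdmod : d % 4 = 2)
    (m n : ℤ) (t : ℝ) :
    (∀ i j, Tmat ((m : ℂ) + (n : ℂ) * (Complex.I * ((√(d : ℝ)) : ℝ))) t i j ∈ Zid d) ↔
      (2 ∣ m ∧ ∃ k : ℤ, t = 2 * √(d : ℝ) * (k : ℝ)) := by
  set s : ℝ := √(d : ℝ) with hs
  have hs2 : s ^ 2 = (d : ℝ) := Real.sq_sqrt (by positivity)
  set β : ℂ := (m : ℂ) + (n : ℂ) * (Complex.I * (s : ℝ)) with hβ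
  have hre : β.re = (m : ℝ) := by simp [hβ]
  have him : β.im = (n : ℝ) * s := by simp [hβ]
  have habs : (‖β‖ ^ 2 : ℝ) = (m : ℝ) ^ 2 + (n : ℝ) ^ 2 * (d : ℝ) := by
    have h' : ((n : ℝ) * s) * ((n : ℝ) * s) = (n : ℝ) ^ 2 * (d : ℝ) := by
      rw [← hs2]; ring
    rw [Complex.sq_norm, Complex.normSq_apply, hre, him, h']; ring
  have e02 : Tmat β t 0 2
      = Complex.ofReal (-((m : ℝ) ^ 2 + (n : ℝ) ^ 2 * (d : ℝ)) / 2)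
        + Complex.I * Complex.ofReal (t / 2) := by
    have h0 : Tmat β t 0 2
        = ((-((‖β‖ ^ 2 : ℝ) : ℂ)) + Complex.I * (t : ℝ)) / 2 := rfl
    rw [h0, habs]; push_cast; ring
  have hre02 : (Tmat β t 0 2).re = -((m : ℝ) ^ 2 + (n : ℝ) ^ 2 * (d : ℝ)) / 2 := by
    rw [e02]
    simp only [Complex.add_re, Complex.ofReal_re, Complex.mul_re, Complex.I_re,
      Complex.I_im, Complex.ofReal_im]
    ring
  have him02 : (Tmat β t 0 2).im = t / 2 := by
    rw [e02]
    simp only [Complex.add_im, Complex.ofReal_im, Complex.mul_im, Complex.I_re,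
      Complex.I_im, Complex.ofReal_re]
    ring
  have hd2 : (2 : ℤ) ∣ (d : ℤ) := by omega
  obtain ⟨c, hc⟩ := hd2
  have hcR : (d : ℝ) = 2 * (c : ℝ) := by exact_mod_cast hc
  constructor
  · intro h
    obtain ⟨a, b, h1, h2⟩ := (mem_Zid_iff d _).mp (h 0 2)
    rw [hre02] at h1
    rw [him02] at h2
    constructor
    · have hR : (m : ℝ) ^ 2 + (n : ℝ) ^ 2 * (d : ℝ) = ((-2 * a : ℤ) : ℝ) := by
        push_cast; linarith
      have hint : m ^ 2 + n ^ 2 * (d : ℤ) = -2 * a := by exact_mod_cast hR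
      have h2m : (2 : ℤ) ∣ m ^ 2 :=
        ⟨-a - n ^ 2 * c, by linear_combination hint - n ^ 2 * hc⟩
      exact Int.Prime.dvd_pow' (by norm_num) h2m
    · rw [← hs] at h2
      exact ⟨b, by linarith⟩
  · rintro ⟨⟨m', rfl⟩, k, ht⟩
    have z1 : (1 : ℂ) ∈ Zid d := ⟨1, 0, by simp⟩
    have z0 : (0 : ℂ) ∈ Zid d := ⟨0, 0, by simp⟩
    have zβ : β ∈ Zid d := by
      refine (mem_Zid_iff d _).mpr ⟨2 * m', n, ?_, ?_⟩
      · rw [hre]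
      · rw [him, hs]
    have zc : -((starRingEnd ℂ) β) ∈ Zid d := by
      refine (mem_Zid_iff d _).mpr ⟨-(2 * m'), n, ?_, ?_⟩
      · simp only [Complex.neg_re, Complex.conj_re, hre]; push_cast; ring
      · simp only [Complex.neg_im, Complex.conj_im, him, neg_neg, hs]
    have z02 : Tmat β t 0 2 ∈ Zid d := by
      refine (mem_Zid_iff d _).mpr ⟨-(2 * m' ^ 2 + n ^ 2 * c), k, ?_, ?_⟩
      · rw [hre02, hcR]; push_cast; ring
      · rw [him02, ht, ← hs]; ring
    intro i j
    fin_cases i <;> fin_cases j <;>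
      first
        | exact z1
        | exact z0
        | exact zβ
        | exact zc
        | exact z02

end
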